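/- Let (Ω, 𝓕, P) be a probability space, α > 0, C₀ > 0, and for each N ∈ ℕ let T_N : Ω → [0, ∞] be a random variable such that P[T_N ≤ t] ≤ C₀(t+1)e^{−αN} for every real t ≥ 0 and every N. Then P[ liminf_{N→∞} T_N = +∞ ] = 1. -/

import Mathlib

open MeasureTheory Filter
open scoped ENNReal

/-- Borel–Cantelli for absorption times: if random variables `T_N` satisfy
`P[T_N ≤ t] ≤ C₀(t+1)e^{−αN}` for all real `t ≥ 0` and all `N`, then almost surely
`liminf_{N→∞} T_N = +∞`. -/
theorem stmt_7 (Ω : Type) [mΩ : MeasurableSpace Ω] (μ : Measure Ω) [IsProbabilityMeasure μ]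
    (α C₀ : ℝ) (hα : 0 < α) (hC₀ : 0 < C₀)
    (T : ℕ → Ω → ℝ≥0∞) (hTmeas : ∀ N, Measurable (T N))
    (htail : ∀ (N : ℕ) (t : ℝ), 0 ≤ t →
      μ {ω | T N ω ≤ ENNReal.ofReal t} ≤
        ENNReal.ofReal (C₀ * (t + 1) * Real.exp (-(α * N)))) :
    μ {ω | Filter.liminf (fun N => T N ω) Filter.atTop = ⊤} = 1 := by
  have key : ∀ k : ℕ, ∀ᵐ ω ∂μ, ∀ᶠ N in atTop, ¬ T N ω ≤ ENNReal.ofReal (k : ℝ) := by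
    intro k
    set f : ℕ → ℝ := fun N => C₀ * ((k : ℝ) + 1) * Real.exp (-(α * N)) with hf
    have hfnonneg : ∀ N, 0 ≤ f N := fun N => by positivity
    have hfsum : Summable f := by
      have : f = fun N : ℕ => (C₀ * ((k : ℝ) + 1)) * (Real.exp (-α)) ^ N := by
        funext N
        simp only [hf]
        rw [← Real.exp_nat_mul]
        ring_nf
      rw [this]
      exact (summable_geometric_of_lt_one (Real.exp_nonneg _)
        (Real.exp_lt_one_iff.mpr (by linarith))).mul_left _
    have hsum : (∑' N : ℕ, μ {ω | T N ω ≤ ENNReal.ofReal (k : ℝ)}) ≠ ⊤ := by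
      have hle : (∑' N : ℕ, μ {ω | T N ω ≤ ENNReal.ofReal (k : ℝ)}) ≤
          ∑' N : ℕ, ENNReal.ofReal (f N) :=
        ENNReal.tsum_le_tsum fun N => htail N (k : ℝ) (Nat.cast_nonneg k)
      have heq : (∑' N : ℕ, ENNReal.ofReal (f N)) = ENNReal.ofReal (∑' N, f N) :=
        (ENNReal.ofReal_tsum_of_nonneg hfnonneg hfsum).symm
      exact ne_top_of_le_ne_top (by rw [heq]; exact ENNReal.ofReal_ne_top) hle
    have h0 : μ {ω | ∃ᶠ N in atTop, ω ∈ {ω | T N ω ≤ ENNReal.ofReal (k : ℝ)}} = 0 :=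
      measure_setOf_frequently_eq_zero hsum
    rw [ae_iff]
    convert h0 using 3
    rfl
  have main : ∀ᵐ ω ∂μ, Filter.liminf (fun N => T N ω) Filter.atTop = ⊤ := by
    filter_upwards [ae_all_iff.2 key] with ω hω
    by_contra h
    obtain ⟨k, hk⟩ := ENNReal.exists_nat_gt h
    have hle : (k : ℝ≥0∞) ≤ Filter.liminf (fun N => T N ω) Filter.atTop := by
      apply Filter.le_liminf_of_le (by isBoundedDefault)
      filter_upwards [hω k] with N hN
      have : ENNReal.ofReal (k : ℝ) < T N ω := not_le.mp hN
      rw [ENNReal.ofReal_natCast] at this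
      exact this.le
    exact absurd hle (not_le.mpr hk)
  set S := {ω | Filter.liminf (fun N => T N ω) Filter.atTop = ⊤} with hS
  have hcompl : μ Sᶜ = 0 := by
    rw [ae_iff] at main
    simpa [hS, Set.compl_setOf] using main
  refine le_antisymm prob_le_one ?_
  calc (1 : ℝ≥0∞) = μ Set.univ := measure_univ.symm
    _ = μ (S ∪ Sᶜ) := by rw [Set.union_compl_self]
    _ ≤ μ S + μ Sᶜ := measure_union_le _ _
    _ = μ S := by rw [hcompl, add_zero]
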